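/- For a uniform cyclic binary CA of length n ≥ 5 with local rule f, if the global map conserves the number of 1s in every configuration, then f satisfies: (f(0,1,0) = f(1,1,0) and f(0,1,1) = f(1,1,1)) or (f(0,1,0) = f(0,1,1) and f(1,1,0) = f(1,1,1)). -/

import Mathlib

/-- Global map of a non-uniform cyclic CA of length `n`:
cell `i` updates via its local rule applied to `(x (i-1), x i, x (i+1))`, indices mod `n`. -/
def caStep (n : ℕ) [NeZero n] (f : Fin n → Bool → Bool → Bool → Bool)
    (x : Fin n → Bool) : Fin n → Bool :=
  fun i => f i (x (i - 1)) (x i) (x (i + 1))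

/-- Number of cells in state `true` (i.e. 1). -/
def onesCount (n : ℕ) (x : Fin n → Bool) : ℕ :=
  (Finset.univ.filter fun i => x i = true).card

/-- The CA conserves the number of 1s in every configuration. -/
def numberConserving (n : ℕ) [NeZero n] (f : Fin n → Bool → Bool → Bool → Bool) : Prop :=
  ∀ x : Fin n → Bool, onesCount n (caStep n f x) = onesCount n x

/-- The elementary CA rule with Wolfram number `R`. -/
def wolfram (R : ℕ) (a b c : Bool) : Bool :=
  R.testBit (4 * a.toNat + 2 * b.toNat + c.toNat)

set_option maxRecDepth 4000 in
open Fin.NatCast in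
theorem stmt2 (n : ℕ) (hn : 5 ≤ n) [NeZero n] (f : Bool → Bool → Bool → Bool)
    (h : numberConserving n (fun _ => f)) :
    (f false true false = f true true false ∧ f false true true = f true true true) ∨
    (f false true false = f false true true ∧ f true true false = f true true true) := by
  have hv : ∀ k : ℕ, k < n → ((k : ℕ) : Fin n).val = k := fun k hk => Fin.val_cast_of_lt hk
  have hne : ∀ j k : ℕ, j < n → k < n → j ≠ k → ((j : ℕ) : Fin n) ≠ ((k : ℕ) : Fin n) := by
    intro j k hj hk hjk hEq
    exact hjk (by rw [← hv j hj, ← hv k hk, hEq])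
  set c0 : Fin n := ((0 : ℕ) : Fin n) with hc0
  set c1 : Fin n := ((1 : ℕ) : Fin n) with hc1
  set c2 : Fin n := ((2 : ℕ) : Fin n) with hc2
  set c3 : Fin n := ((3 : ℕ) : Fin n) with hc3
  set c4 : Fin n := ((4 : ℕ) : Fin n) with hc4
  have h10 : c1 ≠ c0 := hne 1 0 (by omega) (by omega) (by omega)
  have h12 : c1 ≠ c2 := hne 1 2 (by omega) (by omega) (by omega)
  have h13 : c1 ≠ c3 := hne 1 3 (by omega) (by omega) (by omega)
  have h23 : c2 ≠ c3 := hne 2 3 (by omega) (by omega) (by omega)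
  have h20 : c2 ≠ c0 := hne 2 0 (by omega) (by omega) (by omega)
  have h21 : c2 ≠ c1 := hne 2 1 (by omega) (by omega) (by omega)
  have h24 : c2 ≠ c4 := hne 2 4 (by omega) (by omega) (by omega)
  have h30 : c3 ≠ c0 := hne 3 0 (by omega) (by omega) (by omega)
  have h31 : c3 ≠ c1 := hne 3 1 (by omega) (by omega) (by omega)
  have h32 : c3 ≠ c2 := hne 3 2 (by omega) (by omega) (by omega)
  have h40 : c4 ≠ c0 := hne 4 0 (by omega) (by omega) (by omega)
  have h41 : c4 ≠ c1 := hne 4 1 (by omega) (by omega) (by omega)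
  have h43 : c4 ≠ c3 := hne 4 3 (by omega) (by omega) (by omega)
  have hA1 : c1 - 1 = c0 := by rw [hc1, hc0]; push_cast; simp
  have hA2 : c1 + 1 = c2 := by rw [hc1, hc2]; push_cast; norm_num
  have hA3 : c2 - 1 = c1 := by rw [hc2, hc1]; push_cast; rw [sub_eq_iff_eq_add]; norm_num
  have hA4 : c2 + 1 = c3 := by rw [hc2, hc3]; push_cast; norm_num
  have hA5 : c3 - 1 = c2 := by rw [hc3, hc2]; push_cast; rw [sub_eq_iff_eq_add]; norm_num
  have hA6 : c3 + 1 = c4 := by rw [hc3, hc4]; push_cast; norm_num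
  set S : Finset (Fin n) := {c1, c2, c3} with hS
  have hsplit : ∀ z : Fin n → Bool, onesCount n z =
      (S.filter fun i => z i = true).card + (Sᶜ.filter fun i => z i = true).card := by
    intro z
    unfold onesCount
    rw [← Finset.union_compl S, Finset.filter_union, Finset.card_union_of_disjoint]
    exact Finset.disjoint_filter_filter disjoint_compl_right
  have hcardS : ∀ z : Fin n → Bool, ((S.filter fun i => z i = true).card) =
      (z c1).toNat + (z c2).toNat + (z c3).toNat := by
    intro z
    rw [show S = insert c1 (insert c2 {c3}) from rfl, Finset.card_filter]
    rw [Finset.sum_insert (by simp [h12, h13]), Finset.sum_insert (by simp [h23]),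
      Finset.sum_singleton]
    cases z c1 <;> cases z c2 <;> cases z c3 <;> rfl
  have key : ∀ a b d e : Bool,
      (f a b true).toNat + (f b true d).toNat + (f true d e).toNat
      = (f a b false).toNat + (f b false d).toNat + (f false d e).toNat + 1 := by
    intro a b d e
    set x : Fin n → Bool := fun i =>
      if i = c0 then a else if i = c1 then b else if i = c3 then d
      else if i = c4 then e else false with hxdef
    set y : Fin n → Bool := Function.update x c2 true with hydef
    have hx0 : x c0 = a := by rw [hxdef]; simp
    have hx1 : x c1 = b := by rw [hxdef]; simp [h10]
    have hx2 : x c2 = false := by rw [hxdef]; simp [h20, h21, h23, h24]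
    have hx3 : x c3 = d := by rw [hxdef]; simp [h30, h31]
    have hx4 : x c4 = e := by rw [hxdef]; simp [h40, h41, h43]
    have hy2 : y c2 = true := by rw [hydef]; simp
    have hyne : ∀ j, j ≠ c2 → y j = x j := by
      intro j hj; rw [hydef]; exact Function.update_of_ne hj _ _
    have hsy1 : caStep n (fun _ => f) y c1 = f a b true := by
      show f (y (c1 - 1)) (y c1) (y (c1 + 1)) = _
      rw [hA1, hA2, hyne c0 (Ne.symm h20), hyne c1 h12, hy2, hx0, hx1]
    have hsy2 : caStep n (fun _ => f) y c2 = f b true d := by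
      show f (y (c2 - 1)) (y c2) (y (c2 + 1)) = _
      rw [hA3, hA4, hyne c1 h12, hyne c3 (Ne.symm h23), hy2, hx1, hx3]
    have hsy3 : caStep n (fun _ => f) y c3 = f true d e := by
      show f (y (c3 - 1)) (y c3) (y (c3 + 1)) = _
      rw [hA5, hA6, hyne c3 h32, hyne c4 (Ne.symm h24), hy2, hx3, hx4]
    have hsx1 : caStep n (fun _ => f) x c1 = f a b false := by
      show f (x (c1 - 1)) (x c1) (x (c1 + 1)) = _
      rw [hA1, hA2, hx0, hx1, hx2]
    have hsx2 : caStep n (fun _ => f) x c2 = f b false d := by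
      show f (x (c2 - 1)) (x c2) (x (c2 + 1)) = _
      rw [hA3, hA4, hx1, hx2, hx3]
    have hsx3 : caStep n (fun _ => f) x c3 = f false d e := by
      show f (x (c3 - 1)) (x c3) (x (c3 + 1)) = _
      rw [hA5, hA6, hx2, hx3, hx4]
    have hnotinS : ∀ j : Fin n, j ∉ S → j ≠ c1 ∧ j ≠ c2 ∧ j ≠ c3 := by
      intro j hj
      simp only [hS, Finset.mem_insert, Finset.mem_singleton, not_or] at hj
      exact hj
    have hcomplxy : (Sᶜ.filter fun i => y i = true) = (Sᶜ.filter fun i => x i = true) := by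
      apply Finset.filter_congr
      intro j hj
      rw [hyne j (hnotinS j (Finset.mem_compl.mp hj)).2.1]
    have hcomplsteps : (Sᶜ.filter fun i => caStep n (fun _ => f) y i = true)
        = (Sᶜ.filter fun i => caStep n (fun _ => f) x i = true) := by
      apply Finset.filter_congr
      intro j hj
      obtain ⟨hj1, hj2, hj3⟩ := hnotinS j (Finset.mem_compl.mp hj)
      have hm1 : j - 1 ≠ c2 := by
        intro hEq
        exact hj3 (by rw [sub_eq_iff_eq_add.mp hEq, hA4])
      have hp1 : j + 1 ≠ c2 := by
        intro hEq
        exact hj1 (by rw [eq_sub_of_add_eq hEq, hA3])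
      simp only [caStep]
      rw [hyne _ hm1, hyne _ hj2, hyne _ hp1]
    have E1 := h y
    have E2 := h x
    rw [hsplit, hsplit, hcardS, hcardS, hcomplxy, hcomplsteps] at E1
    rw [hsplit, hsplit, hcardS, hcardS] at E2
    rw [hsy1, hsy2, hsy3, hyne c1 h12, hy2, hyne c3 h32, hx1, hx3] at E1
    rw [hsx1, hsx2, hsx3, hx1, hx2, hx3] at E2
    simp only [Bool.toNat_true, Bool.toNat_false] at E1 E2
    omega
  clear h
  revert f
  decide
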